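/- arXiv:1206.5515 — 2 statements merged into one kernel-verified Lean document; each statement's English description precedes it below -/
import Mathlib

section
/- Every stochastic process (X_t)_{t∈[0,1]} with values in ℝⁿ which is continuous in probability admits a measurable version: a process (Y_t) that is jointly measurable on Ω×[0,1] with Y_t = X_t almost surely for every t. -/
open MeasureTheory Set

noncomputable section

/-- `ℝⁿ` with the Euclidean norm. -/
abbrev En (n : ℕ) := EuclideanSpace ℝ (Fin n)

/-- `γ` is a coupling of `μ` and `ν`. -/
def IsCoupling {n : ℕ} (γ : Measure (En n × En n)) (μ ν : Measure (En n)) : Prop :=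
  γ.map Prod.fst = μ ∧ γ.map Prod.snd = ν

/-- The squared quadratic Wasserstein distance `W₂²(μ,ν)`. -/
def W2sq {n : ℕ} (μ ν : Measure (En n)) : ℝ :=
  sInf { c | ∃ γ : Measure (En n × En n), IsCoupling γ μ ν ∧ c = ∫ p, ‖p.1 - p.2‖ ^ 2 ∂γ }

/-- `μ` has finite second moment. -/
def FinSecMom {n : ℕ} (μ : Measure (En n)) : Prop := Integrable (fun x => ‖x‖ ^ 2) μ

/-- The curve `t ↦ μ t` is weakly continuous on `s`. -/
def WeakContOn {n : ℕ} (μ : ℝ → Measure (En n)) (s : Set ℝ) : Prop :=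
  ∀ f : BoundedContinuousFunction (En n) ℝ, ContinuousOn (fun t => ∫ x, f x ∂(μ t)) s

/-- `μb` is a barycenter of the curve `t ↦ μ t`, `t ∈ [0,1]`: it minimizes
`ν ↦ ∫₀¹ W₂²(μ_t, ν) dt` over probability measures with finite second moment. -/
def IsBarycenter {n : ℕ} (μ : ℝ → Measure (En n)) (μb : Measure (En n)) : Prop :=
  IsProbabilityMeasure μb ∧ FinSecMom μb ∧
    ∀ ν : Measure (En n), IsProbabilityMeasure ν → FinSecMom ν →
      ∫ t in Icc (0:ℝ) 1, W2sq (μ t) μb ≤ ∫ t in Icc (0:ℝ) 1, W2sq (μ t) ν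

namespace Stmt11Aux

open Filter Topology

variable {n : ℕ} {Ω : Type*} [MeasurableSpace Ω] (P : Measure Ω) [IsProbabilityMeasure P]
  (X : ℝ → Ω → En n)

/-- A Ky Fan-type distance measuring convergence in probability. -/
def dd (s t : ℝ) : ℝ := ∫ ω, min 1 (dist (X s ω) (X t ω)) ∂P

variable (hmeas : ∀ t, Measurable (X t))
include hmeas

lemma intg (s t : ℝ) : Integrable (fun ω => min 1 (dist (X s ω) (X t ω))) P := by
  have hm : Measurable fun ω => min 1 (dist (X s ω) (X t ω)) :=
    measurable_const.min ((hmeas s).dist (hmeas t))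
  refine Integrable.mono' (integrable_const 1) hm.aestronglyMeasurable ?_
  filter_upwards with ω
  rw [Real.norm_eq_abs, abs_of_nonneg (le_min zero_le_one dist_nonneg)]
  exact min_le_left _ _

omit hmeas in
lemma dd_nonneg (s t : ℝ) : 0 ≤ dd P X s t :=
  integral_nonneg fun ω => le_min zero_le_one dist_nonneg

omit hmeas in
lemma dd_symm (s t : ℝ) : dd P X s t = dd P X t s := by
  unfold dd; simp_rw [dist_comm]

omit hmeas in
lemma min1_add {x y : ℝ} (hx : 0 ≤ x) (hy : 0 ≤ y) :
    min 1 (x + y) ≤ min 1 x + min 1 y := by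
  rcases le_total 1 x with h | h
  · have h1 : min 1 x = 1 := min_eq_left h
    have h2 : (0:ℝ) ≤ min 1 y := le_min zero_le_one hy
    have h3 := min_le_left (1:ℝ) (x + y)
    linarith
  rcases le_total 1 y with h' | h'
  · have h1 : min 1 y = 1 := min_eq_left h'
    have h2 : (0:ℝ) ≤ min 1 x := le_min zero_le_one hx
    have h3 := min_le_left (1:ℝ) (x + y)
    linarith
  · have h3 := min_le_right (1:ℝ) (x + y)
    rw [min_eq_right h, min_eq_right h']
    linarith

lemma dd_triangle (s u t : ℝ) : dd P X s t ≤ dd P X s u + dd P X u t := by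
  unfold dd
  rw [← integral_add (intg P X hmeas s u) (intg P X hmeas u t)]
  refine integral_mono (intg P X hmeas s t)
    ((intg P X hmeas s u).add (intg P X hmeas u t)) fun ω => ?_
  calc min 1 (dist (X s ω) (X t ω))
      ≤ min 1 (dist (X s ω) (X u ω) + dist (X u ω) (X t ω)) :=
        min_le_min le_rfl (dist_triangle _ _ _)
    _ ≤ _ := min1_add dist_nonneg dist_nonneg

lemma markov {s t ε : ℝ} (hε : 0 < ε) (hε1 : ε ≤ 1) :
    (P {ω | ε < dist (X s ω) (X t ω)}).toReal ≤ dd P X s t / ε := by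
  set A := {ω | ε < dist (X s ω) (X t ω)} with hAdef
  have hA : MeasurableSet A := measurableSet_lt measurable_const ((hmeas s).dist (hmeas t))
  have h1 : ∫ ω, A.indicator (fun _ => ε) ω ∂P ≤ dd P X s t := by
    refine integral_mono ((integrable_const ε).indicator hA) (intg P X hmeas s t) fun ω => ?_
    by_cases hω : ω ∈ A
    · rw [Set.indicator_of_mem hω]
      exact le_min hε1 (le_of_lt hω)
    · rw [Set.indicator_of_notMem hω]
      exact le_min zero_le_one dist_nonneg
  rw [integral_indicator_const _ hA, smul_eq_mul] at h1
  rw [le_div_iff₀ hε]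
  rw [measureReal_def] at h1
  linarith

lemma dd_le {s t ε : ℝ} (hε : 0 < ε) :
    dd P X s t ≤ ε + (P {ω | ε < dist (X s ω) (X t ω)}).toReal := by
  set A := {ω | ε < dist (X s ω) (X t ω)} with hAdef
  have hA : MeasurableSet A := measurableSet_lt measurable_const ((hmeas s).dist (hmeas t))
  have h1 : dd P X s t ≤ ∫ ω, (ε + A.indicator (fun _ => (1:ℝ)) ω) ∂P := by
    refine integral_mono (intg P X hmeas s t)
      ((integrable_const ε).add ((integrable_const 1).indicator hA)) fun ω => ?_
    by_cases hω : ω ∈ A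
    · rw [Set.indicator_of_mem hω]
      have := min_le_left (1:ℝ) (dist (X s ω) (X t ω))
      linarith
    · rw [Set.indicator_of_notMem hω]
      have h2 : dist (X s ω) (X t ω) ≤ ε := not_lt.1 hω
      have := min_le_right (1:ℝ) (dist (X s ω) (X t ω))
      linarith
  rw [integral_add (integrable_const ε) ((integrable_const 1).indicator hA),
    integral_const, integral_indicator_const _ hA, smul_eq_mul, smul_eq_mul] at h1
  simpa [measure_univ, measureReal_def] using h1

lemma dd_tendsto
    (hcp : ∀ t ∈ Icc (0:ℝ) 1, ∀ ε : ℝ, 0 < ε →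
      Filter.Tendsto (fun s => P {ω | ε < dist (X s ω) (X t ω)})
        (nhdsWithin t (Icc (0:ℝ) 1)) (nhds 0))
    {u : ℝ} (hu : u ∈ Icc (0:ℝ) 1) :
    Tendsto (fun s => dd P X s u) (nhdsWithin u (Icc (0:ℝ) 1)) (𝓝 0) := by
  rw [Metric.tendsto_nhds]
  intro δ hδ
  have h2 : 0 < δ / 2 := by linarith
  have hev : ∀ᶠ s in nhdsWithin u (Icc (0:ℝ) 1),
      P {ω | δ/2 < dist (X s ω) (X u ω)} < ENNReal.ofReal (δ/2) :=
    (hcp u hu (δ/2) h2).eventually_lt_const (by simp [ENNReal.ofReal_pos, h2])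
  filter_upwards [hev] with s hs
  have hb := dd_le P X hmeas (s := s) (t := u) h2
  have h3 : (P {ω | δ/2 < dist (X s ω) (X u ω)}).toReal < δ/2 :=
    ENNReal.toReal_lt_of_lt_ofReal hs
  rw [Real.dist_eq, sub_zero, abs_of_nonneg (dd_nonneg P X s u)]
  linarith

lemma dd_unif
    (hcp : ∀ t ∈ Icc (0:ℝ) 1, ∀ ε : ℝ, 0 < ε →
      Filter.Tendsto (fun s => P {ω | ε < dist (X s ω) (X t ω)})
        (nhdsWithin t (Icc (0:ℝ) 1)) (nhds 0))
    {δ : ℝ} (hδ : 0 < δ) :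
    ∃ η > 0, ∀ s ∈ Icc (0:ℝ) 1, ∀ t ∈ Icc (0:ℝ) 1, dist s t < η → dd P X s t < δ := by
  have key : ∀ u ∈ Icc (0:ℝ) 1, ∃ r > 0, ∀ s ∈ Icc (0:ℝ) 1,
      dist s u < r → dd P X s u < δ / 2 := by
    intro u hu
    have h := dd_tendsto P X hmeas hcp hu
    rw [Metric.tendsto_nhdsWithin_nhds] at h
    obtain ⟨r, hr, h⟩ := h (δ/2) (by linarith)
    refine ⟨r, hr, fun s hs hd => ?_⟩
    have := h hs hd
    rw [Real.dist_eq, sub_zero] at this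
    exact lt_of_abs_lt this
  choose r hr h using fun u : Icc (0:ℝ) 1 => key u u.2
  obtain ⟨η, hη, hball⟩ := lebesgue_number_lemma_of_metric (isCompact_Icc (a := (0:ℝ)) (b := 1))
    (c := fun u : Icc (0:ℝ) 1 => Metric.ball (u : ℝ) (r u)) (fun u => Metric.isOpen_ball)
    (fun x hx => Set.mem_iUnion.2 ⟨⟨x, hx⟩, Metric.mem_ball_self (hr _)⟩)
  refine ⟨η, hη, fun s hs t ht hst => ?_⟩
  obtain ⟨u, hu⟩ := hball t ht
  have hsu : dist s (u : ℝ) < r u := Metric.mem_ball.1 (hu (Metric.mem_ball.2 hst))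
  have htu : dist t (u : ℝ) < r u := Metric.mem_ball.1 (hu (Metric.mem_ball_self hη))
  have h1 : dd P X s u < δ/2 := h u s hs hsu
  have h2 : dd P X (u : ℝ) t < δ/2 := by rw [dd_symm]; exact h u t ht htu
  have h3 := dd_triangle P X hmeas s u t
  linarith

lemma meas_comp {c : ℝ → ℝ} (hc : Measurable c) (hcc : (Set.range c).Countable) :
    Measurable fun p : ℝ × Ω => X (c p.1) p.2 := by
  intro s hs
  have hrw : (fun p : ℝ × Ω => X (c p.1) p.2) ⁻¹' s =
      ⋃ v ∈ Set.range c, ((fun p : ℝ × Ω => c p.1) ⁻¹' {v}) ∩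
        ((fun p : ℝ × Ω => X v p.2) ⁻¹' s) := by
    ext p
    simp only [Set.mem_preimage, Set.mem_iUnion, Set.mem_inter_iff, Set.mem_singleton_iff]
    constructor
    · intro hp
      exact ⟨c p.1, ⟨p.1, rfl⟩, rfl, hp⟩
    · rintro ⟨v, _, rfl, hp⟩
      exact hp
  rw [hrw]
  exact MeasurableSet.biUnion hcc fun v _ =>
    ((hc.comp measurable_fst) (measurableSet_singleton v)).inter
      (((hmeas v).comp measurable_snd) hs)

end Stmt11Aux

open Filter Topology

/-- every `ℝⁿ`-valued stochastic process on `[0,1]` that is continuous in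
probability admits a jointly measurable version. -/
theorem stmt11 {n : ℕ} {Ω : Type*} [MeasurableSpace Ω] (P : Measure Ω)
    [IsProbabilityMeasure P] (X : ℝ → Ω → En n) (hmeas : ∀ t, Measurable (X t))
    (hcp : ∀ t ∈ Icc (0:ℝ) 1, ∀ ε : ℝ, 0 < ε →
      Filter.Tendsto (fun s => P {ω | ε < dist (X s ω) (X t ω)})
        (nhdsWithin t (Icc (0:ℝ) 1)) (nhds 0)) :
    ∃ Y : ℝ → Ω → En n, Measurable (fun p : ℝ × Ω => Y p.1 p.2) ∧
      ∀ t ∈ Icc (0:ℝ) 1, ∀ᵐ ω ∂P, Y t ω = X t ω := by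
  classical
  -- Step 1: dyadic-grid approximating functions.
  have key : ∀ k : ℕ, ∃ φ : ℝ → ℝ, Measurable φ ∧ (Set.range φ).Countable ∧
      ∀ t ∈ Icc (0:ℝ) 1, φ t ∈ Icc (0:ℝ) 1 ∧ Stmt11Aux.dd P X (φ t) t < (1/4 : ℝ)^k := by
    intro k
    obtain ⟨η, hη, hun⟩ := Stmt11Aux.dd_unif P X hmeas hcp (δ := (1/4 : ℝ)^k) (by positivity)
    obtain ⟨m, hm⟩ : ∃ m : ℕ, (1/2 : ℝ)^m < η := exists_pow_lt_of_lt_one hη (by norm_num)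
    refine ⟨fun t => (⌈(2:ℝ)^m * t⌉ : ℝ) / 2^m, ?_, ?_, ?_⟩
    · exact ((measurable_of_countable (fun j : ℤ => (j : ℝ) / 2^m)).comp
        (Int.measurable_ceil.comp (measurable_const_mul _)))
    · refine Set.Countable.mono ?_ (Set.countable_range fun j : ℤ => (j : ℝ) / 2^m)
      rintro x ⟨t, rfl⟩
      exact ⟨⌈(2:ℝ)^m * t⌉, rfl⟩
    · intro t ht
      obtain ⟨ht0, ht1⟩ := ht
      have hpow : (0:ℝ) < 2^m := by positivity
      have hle : (2:ℝ)^m * t ≤ (⌈(2:ℝ)^m * t⌉ : ℝ) := Int.le_ceil _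
      have hlt : ((⌈(2:ℝ)^m * t⌉ : ℝ)) < (2:ℝ)^m * t + 1 := Int.ceil_lt_add_one _
      have hmem : (⌈(2:ℝ)^m * t⌉ : ℝ) / 2^m ∈ Icc (0:ℝ) 1 := by
        constructor
        · have : (0:ℤ) ≤ ⌈(2:ℝ)^m * t⌉ := Int.ceil_nonneg (by positivity)
          have : (0:ℝ) ≤ (⌈(2:ℝ)^m * t⌉ : ℝ) := by exact_mod_cast this
          positivity
        · rw [div_le_one hpow]
          have : ⌈(2:ℝ)^m * t⌉ ≤ (2:ℤ)^m := by
            rw [Int.ceil_le]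
            push_cast
            nlinarith
          exact_mod_cast this
      refine ⟨hmem, ?_⟩
      have hdist : dist ((⌈(2:ℝ)^m * t⌉ : ℝ) / 2^m) t < η := by
        rw [Real.dist_eq, abs_of_nonneg (by rw [sub_nonneg, le_div_iff₀ hpow]; linarith)]
        rw [div_sub' (ne_of_gt hpow), div_lt_iff₀ hpow]
        have h12 : (1/2 : ℝ)^m * 2^m = 1 := by
          rw [← mul_pow]; norm_num
        nlinarith
      exact hun _ hmem t ⟨ht0, ht1⟩ hdist
  choose φ hφm hφc hφ using key
  -- Step 2: jointly measurable approximations and their limit.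
  set g : ℕ → ℝ × Ω → En n := fun k p => X (φ k p.1) p.2 with hgdef
  have hgm : ∀ k, Measurable (g k) := fun k => Stmt11Aux.meas_comp X hmeas (hφm k) (hφc k)
  set S := {p : ℝ × Ω | ∃ c, Tendsto (fun k => g k p) atTop (𝓝 c)} with hSdef
  have hSm : MeasurableSet S := measurableSet_exists_tendsto hgm
  set h : ℕ → ℝ × Ω → En n := fun k p => if p ∈ S then g k p else 0 with hhdef
  have hhm : ∀ k, Measurable (h k) := fun k => Measurable.ite hSm (hgm k) measurable_const
  set Y0 : ℝ × Ω → En n := fun p => limUnder atTop (fun k => h k p) with hY0def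
  have hconv : ∀ p, Tendsto (fun k => h k p) atTop (𝓝 (Y0 p)) := by
    intro p
    by_cases hp : p ∈ S
    · obtain ⟨c, hc⟩ := hp
      have hc' : Tendsto (fun k => h k p) atTop (𝓝 c) := by
        have : ∀ k, h k p = g k p := fun k => if_pos ⟨c, hc⟩
        simpa [this] using hc
      have hYp : Y0 p = c := hc'.limUnder_eq
      rw [hYp]
      exact hc'
    · have hc' : Tendsto (fun k => h k p) atTop (𝓝 0) := by
        have : ∀ k, h k p = 0 := fun k => if_neg hp
        simpa [this] using tendsto_const_nhds
      have hYp : Y0 p = 0 := hc'.limUnder_eq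
      rw [hYp]
      exact hc'
  have hYm : Measurable Y0 := measurable_of_tendsto_metrizable hhm (tendsto_pi_nhds.2 hconv)
  refine ⟨fun t ω => Y0 (t, ω), hYm, ?_⟩
  -- Step 3: for each fixed `t`, `Y0 (t, ·) = X t` almost surely, via Borel–Cantelli.
  intro t ht
  set A : ℕ → Set Ω := fun k => {ω | (1/2 : ℝ)^k < dist (X (φ k t) ω) (X t ω)} with hAdef
  have hb : ∀ k : ℕ, P (A k) ≤ ENNReal.ofReal ((1/2 : ℝ)^k) := by
    intro k
    have h1 := Stmt11Aux.markov P X hmeas (s := φ k t) (t := t) (ε := (1/2 : ℝ)^k)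
      (by positivity) (pow_le_one₀ (by norm_num) (by norm_num))
    have h2 : Stmt11Aux.dd P X (φ k t) t < (1/4 : ℝ)^k := (hφ k t ht).2
    have h3 : (P (A k)).toReal ≤ (1/2 : ℝ)^k := by
      have hq : Stmt11Aux.dd P X (φ k t) t / (1/2 : ℝ)^k ≤ (1/4 : ℝ)^k / (1/2 : ℝ)^k := by
        gcongr
      have heq : (1/4 : ℝ)^k / (1/2 : ℝ)^k = (1/2 : ℝ)^k := by
        rw [div_eq_iff (by positivity : ((1/2 : ℝ)^k) ≠ 0), ← mul_pow]
        norm_num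
      calc (P (A k)).toReal ≤ Stmt11Aux.dd P X (φ k t) t / (1/2 : ℝ)^k := h1
        _ ≤ (1/4 : ℝ)^k / (1/2 : ℝ)^k := hq
        _ = (1/2 : ℝ)^k := heq
    calc P (A k) = ENNReal.ofReal ((P (A k)).toReal) := by
          rw [ENNReal.ofReal_toReal (measure_ne_top P _)]
      _ ≤ ENNReal.ofReal ((1/2 : ℝ)^k) := ENNReal.ofReal_le_ofReal h3
  have hsum : (∑' k, P (A k)) ≠ ⊤ := by
    refine ne_top_of_le_ne_top ?_ (ENNReal.tsum_le_tsum hb)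
    rw [← ENNReal.ofReal_tsum_of_nonneg (fun k => by positivity)
      (summable_geometric_of_lt_one (by norm_num) (by norm_num))]
    exact ENNReal.ofReal_ne_top
  have hae := MeasureTheory.ae_eventually_notMem (μ := P) hsum
  filter_upwards [hae] with ω hω
  have htend : Tendsto (fun k => X (φ k t) ω) atTop (𝓝 (X t ω)) := by
    rw [tendsto_iff_dist_tendsto_zero]
    have hle : ∀ᶠ k in atTop, dist (X (φ k t) ω) (X t ω) ≤ (1/2 : ℝ)^k := by
      filter_upwards [hω] with k hk
      exact not_lt.1 hk
    exact squeeze_zero' (Eventually.of_forall fun k => dist_nonneg) hle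
      (tendsto_pow_atTop_nhds_zero_of_lt_one (by norm_num) (by norm_num))
  have hpS : (t, ω) ∈ S := ⟨X t ω, htend⟩
  have hfin : Tendsto (fun k => h k (t, ω)) atTop (𝓝 (X t ω)) := by
    have : ∀ k, h k (t, ω) = g k (t, ω) := fun k => if_pos hpS
    simpa [this] using htend
  exact hfin.limUnder_eq
end
end

section
/- Under Assumption B, if additionally μ_{t₀} is absolutely continuous with respect to Lebesgue measure for some t₀ ∈ [0,1], then the optimal process admits a Monge (deterministic) representation: X_t^{opt} = F_t(X_{t₀}^{opt}), where F_t = Du_t ∘ Du*_{t₀} pushes μ_{t₀} forward to μ_t for each t, and F_{t₀} is the identity μ_{t₀}-almost everywhere. Here u*_{t₀} is the Legendre transform of u_{t₀}, and Du_t is the Brenier map from the barycenter μ^∞ to μ_t. -/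
open MeasureTheory Set

noncomputable section

open Metric Filter Topology
open scoped RealInnerProductSpace

/-- Gradient inequality for convex functions. -/
lemma convexOn_gradient_ineq {n : ℕ} {f : En n → ℝ} (hf : ConvexOn ℝ univ f)
    {y z : En n} (hy : HasGradientAt f z y) (x : En n) :
    f y + ⟪z, x - y⟫ ≤ f x := by
  set φ : ℝ → ℝ := fun t => f (y + t • (x - y)) with hφdef
  have hc : HasDerivAt (fun t : ℝ => y + t • (x - y)) (x - y) 0 := by
    simpa using ((hasDerivAt_id (0:ℝ)).smul_const (x - y)).const_add y
  have h0 : y + (0:ℝ) • (x - y) = y := by simp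
  have hy' : HasFDerivAt f (InnerProductSpace.toDual ℝ (En n) z) (y + (0:ℝ) • (x - y)) := by
    rw [h0]; exact hy.hasFDerivAt
  have hφd : HasDerivAt φ ⟪z, x - y⟫ 0 := by
    have := hy'.comp_hasDerivAt (0:ℝ) hc
    simpa [φ, InnerProductSpace.toDual_apply_apply, Function.comp_def] using this
  have hφ0 : φ 0 = f y := by simp [φ]
  have hφ1 : φ 1 = f x := by simp [φ]
  have hslope : ∀ t ∈ Ioc (0:ℝ) 1, slope φ 0 t ≤ f x - f y := by
    intro t ht
    have hcomb : φ t ≤ (1 - t) * f y + t * f x := by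
      have h2 := hf.2 (mem_univ y) (mem_univ x) (by linarith [ht.2] : (0:ℝ) ≤ 1 - t)
        (le_of_lt ht.1) (by ring)
      have heq : (1 - t) • y + t • x = y + t • (x - y) := by
        rw [sub_smul, one_smul, smul_sub]; abel
      rw [heq] at h2
      simpa [φ, smul_eq_mul, hφ1] using h2
    have ht0 : (0:ℝ) < t := ht.1
    rw [slope_def_field]
    rw [sub_zero, div_le_iff₀ ht0]
    rw [hφ0] at *
    nlinarith
  have hT : Tendsto (slope φ 0) (𝓝[≠] 0) (𝓝 ⟪z, x - y⟫) :=
    hasDerivAt_iff_tendsto_slope.1 hφd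
  have hT' : Tendsto (slope φ 0) (𝓝[>] 0) (𝓝 ⟪z, x - y⟫) :=
    hT.mono_left (nhdsWithin_mono 0 (fun t (ht : t ∈ Ioi (0:ℝ)) => ne_of_gt ht))
  have hle : ⟪z, x - y⟫ ≤ f x - f y :=
    le_of_tendsto hT' (Filter.eventually_of_mem
      (Ioc_mem_nhdsGT_of_mem ⟨le_refl 0, zero_lt_one⟩) hslope)
  linarith

/-- A subgradient at a point of differentiability is the gradient. -/
lemma subgrad_eq_grad {n : ℕ} {v : En n → ℝ} {y z w : En n}
    (hsub : ∀ z', v z + ⟪y, z' - z⟫ ≤ v z') (hd : HasGradientAt v w z) : w = y := by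
  have key : ∀ d : En n, ⟪w, d⟫ = ⟪y, d⟫ := by
    intro d
    set ψ : ℝ → ℝ := fun t => v (z + t • d) - t * ⟪y, d⟫ with hψdef
    have hc : HasDerivAt (fun t : ℝ => z + t • d) d 0 := by
      simpa using ((hasDerivAt_id (0:ℝ)).smul_const d).const_add z
    have h0 : z + (0:ℝ) • d = z := by simp
    have hd' : HasFDerivAt v (InnerProductSpace.toDual ℝ (En n) w) (z + (0:ℝ) • d) := by
      rw [h0]; exact hd.hasFDerivAt
    have hv : HasDerivAt (fun t : ℝ => v (z + t • d)) ⟪w, d⟫ 0 := by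
      have := hd'.comp_hasDerivAt (0:ℝ) hc
      simpa [InnerProductSpace.toDual_apply_apply, Function.comp_def] using this
    have hψd : HasDerivAt ψ (⟪w, d⟫ - ⟪y, d⟫) 0 := by
      have h := hv.sub ((hasDerivAt_id (0:ℝ)).mul_const ⟪y, d⟫)
      simp only [one_mul] at h
      exact h
    have hmin : IsLocalMin ψ 0 := by
      apply Filter.Eventually.of_forall
      intro t
      have hs := hsub (z + t • d)
      have hin : ⟪y, z + t • d - z⟫ = t * ⟪y, d⟫ := by
        rw [add_sub_cancel_left, real_inner_smul_right]
      simp only [ψ, hψdef, zero_smul, add_zero, zero_mul, sub_zero]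
      rw [hin] at hs
      linarith
    have := hmin.hasDerivAt_eq_zero hψd
    linarith [this]
  have h2 : ⟪w - y, w - y⟫ = 0 := by
    rw [inner_sub_left, key (w - y)]; ring
  have h3 := inner_self_eq_zero.1 h2
  rwa [sub_eq_zero] at h3

/-- The truncated Legendre transform is Lipschitz. -/
lemma sup_lipschitz {n : ℕ} (f : En n → ℝ) (m : ℕ)
    (hc : ContinuousOn f (closedBall (0 : En n) m)) :
    LipschitzWith m (fun z : En n =>
      sSup ((fun x => ⟪x, z⟫ - f x) '' closedBall (0 : En n) m)) := by
  set K : Set (En n) := closedBall 0 m with hKdef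
  set v : En n → ℝ := fun z => sSup ((fun x => ⟪x, z⟫ - f x) '' K) with hvdef
  have hne : K.Nonempty := ⟨0, mem_closedBall_self (by positivity)⟩
  have hK : IsCompact K := isCompact_closedBall _ _
  have hbdd : ∀ z : En n, BddAbove ((fun x => ⟪x, z⟫ - f x) '' K) := by
    intro z
    exact (hK.image_of_continuousOn
      ((continuous_id.inner continuous_const).continuousOn.sub hc)).bddAbove
  have main : ∀ z1 z2 : En n, v z1 ≤ v z2 + m * dist z1 z2 := by
    intro z1 z2
    apply csSup_le (hne.image _)
    rintro b ⟨x, hx, rfl⟩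
    show ⟪x, z1⟫ - f x ≤ v z2 + (m : ℝ) * dist z1 z2
    have h1 : ⟪x, z2⟫ - f x ≤ v z2 := le_csSup (hbdd z2) ⟨x, hx, rfl⟩
    have h2 : ⟪x, z1 - z2⟫ ≤ (m : ℝ) * dist z1 z2 := by
      calc ⟪x, z1 - z2⟫ ≤ ‖x‖ * ‖z1 - z2‖ := real_inner_le_norm _ _
        _ ≤ (m : ℝ) * dist z1 z2 := by
            rw [dist_eq_norm]
            exact mul_le_mul_of_nonneg_right (mem_closedBall_zero_iff.1 hx) (norm_nonneg _)
    have h3 : ⟪x, z1⟫ - f x = (⟪x, z2⟫ - f x) + ⟪x, z1 - z2⟫ := by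
      rw [inner_sub_right]; ring
    linarith
  apply LipschitzWith.of_dist_le_mul
  intro z1 z2
  rw [Real.dist_eq, abs_sub_le_iff]
  have m1 := main z1 z2
  have m2 := main z2 z1
  rw [dist_comm z2 z1] at m2
  constructor <;> [skip; skip] <;> push_cast <;> linarith

/-- under Assumption B, if `μ_{t₀}` is absolutely continuous, the optimal
process has a Monge representation over time `t₀`: there are maps `F_t = Du_t ∘ Du*_{t₀}`
pushing `μ_{t₀}` to `μ_t`, with `F_{t₀}` the identity `μ_{t₀}`-a.e., such that
`X_t^{opt} = F_t(X_{t₀}^{opt})`, i.e. `F_t ∘ Du_{t₀} = Du_t` holds `μ^∞`-a.e. -/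
theorem stmt17 {n : ℕ} (M : Set (En n)) (hM : Bornology.IsBounded M)
    (μ : ℝ → Measure (En n)) (hprob : ∀ t ∈ Icc (0:ℝ) 1, IsProbabilityMeasure (μ t))
    (hsupp : ∀ t ∈ Icc (0:ℝ) 1, μ t Mᶜ = 0)
    (hcont : WeakContOn μ (Icc 0 1))
    (hB : 0 < volume {t | t ∈ Icc (0:ℝ) 1 ∧ ∃ g : En n → ℝ,
      μ t = volume.withDensity (fun x => ENNReal.ofReal (g x)) ∧
        eLpNorm g ⊤ volume < ⊤})
    (μb : Measure (En n)) (hbary : IsBarycenter μ μb)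
    (u : ℝ → En n → ℝ) (T : ℝ → En n → En n)
    (hconv : ∀ t ∈ Icc (0:ℝ) 1, ConvexOn ℝ univ (u t))
    (hgrad : ∀ t ∈ Icc (0:ℝ) 1, ∀ᵐ y ∂μb, HasGradientAt (u t) (T t y) y)
    (hpush : ∀ t ∈ Icc (0:ℝ) 1, μb.map (T t) = μ t)
    (hopt : ∀ t ∈ Icc (0:ℝ) 1, ∫ y, ‖y - T t y‖ ^ 2 ∂μb = W2sq μb (μ t))
    (t₀ : ℝ) (ht₀ : t₀ ∈ Icc (0:ℝ) 1) (hac : μ t₀ ≪ volume) :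
    ∃ F : ℝ → En n → En n,
      (∀ t ∈ Icc (0:ℝ) 1, (μ t₀).map (F t) = μ t) ∧
        (∀ᵐ z ∂(μ t₀), F t₀ z = z) ∧
          ∀ t ∈ Icc (0:ℝ) 1, ∀ᵐ y ∂μb, F t (T t₀ y) = T t y := by
  classical
  -- measurable versions of the maps T t
  have aemeas : ∀ t ∈ Icc (0:ℝ) 1, AEMeasurable (T t) μb := by
    intro t ht
    by_contra h
    have h0 : μb.map (T t) = 0 := Measure.map_of_not_aemeasurable h
    rw [hpush t ht] at h0
    haveI := hprob t ht
    exact (IsProbabilityMeasure.ne_zero (μ t)) h0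
  have hgex : ∀ t, t ∈ Icc (0:ℝ) 1 → ∃ gt : En n → En n, Measurable gt ∧ T t =ᵐ[μb] gt :=
    fun t ht => ⟨(aemeas t ht).mk _, (aemeas t ht).measurable_mk, (aemeas t ht).ae_eq_mk⟩
  choose g hgmeas hgae using hgex
  set u₀ : En n → ℝ := u t₀ with hu₀def
  set g₀ : En n → En n := g t₀ ht₀ with hg₀def
  -- truncated Legendre transforms
  set v : ℕ → En n → ℝ := fun m z =>
    sSup ((fun x => ⟪x, z⟫ - u₀ x) '' closedBall (0 : En n) m) with hvdef
  have hucont : ∀ m : ℕ, ContinuousOn u₀ (closedBall (0 : En n) m) :=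
    fun m => ((hconv t₀ ht₀).continuousOn isOpen_univ).mono (subset_univ _)
  have hvlip : ∀ m : ℕ, LipschitzWith m (v m) := fun m => sup_lipschitz u₀ m (hucont m)
  have hvdiff : ∀ m : ℕ, ∀ᵐ z ∂(volume : Measure (En n)), DifferentiableAt ℝ (v m) z :=
    fun m => (hvlip m).ae_differentiableAt
  set G : Set (En n) := {z | ∀ m : ℕ, DifferentiableAt ℝ (v m) z} with hGdef
  have hGmeas : MeasurableSet G := by
    have : G = ⋂ m : ℕ, {z | DifferentiableAt ℝ (v m) z} := by
      ext z; simp [hGdef]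
    rw [this]
    exact MeasurableSet.iInter fun m => measurableSet_of_differentiableAt ℝ (v m)
  have hGvol : (volume : Measure (En n)) Gᶜ = 0 := by
    have : ∀ᵐ z ∂(volume : Measure (En n)), z ∈ G := ae_all_iff.2 hvdiff
    rw [ae_iff] at this; exact this
  have hGt₀ : μ t₀ Gᶜ = 0 := hac hGvol
  -- the good set A
  have hgradmeas : Measurable (fun y => gradient u₀ y) := by
    exact ((InnerProductSpace.toDual ℝ (En n)).symm.continuous.measurable).comp
      (measurable_fderiv ℝ u₀)
  set A : Set (En n) :=
    {y | DifferentiableAt ℝ u₀ y} ∩ {y | gradient u₀ y = g₀ y} ∩ (g₀ ⁻¹' G) with hAdef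
  have hAmeas : MeasurableSet A :=
    ((measurableSet_of_differentiableAt ℝ u₀).inter
      (measurableSet_eq_fun hgradmeas (hgmeas t₀ ht₀))).inter ((hgmeas t₀ ht₀) hGmeas)
  have hTG : ∀ᵐ y ∂μb, T t₀ y ∈ G := by
    have h1 : μ t₀ Gᶜ = 0 := hGt₀
    rw [← hpush t₀ ht₀, Measure.map_apply_of_aemeasurable (aemeas t₀ ht₀) hGmeas.compl] at h1
    rw [ae_iff]
    convert h1 using 2
    rfl
  have hAae : ∀ᵐ y ∂μb, y ∈ A := by
    filter_upwards [hgrad t₀ ht₀, hgae t₀ ht₀, hTG] with y hgy hTg hTGy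
    have hdy : DifferentiableAt ℝ u₀ y := hgy.hasFDerivAt.differentiableAt
    have hfd : fderiv ℝ u₀ y = InnerProductSpace.toDual ℝ (En n) (T t₀ y) :=
      hgy.hasFDerivAt.fderiv
    have hgrady : gradient u₀ y = T t₀ y := by
      rw [gradient, hfd, LinearIsometryEquiv.symm_apply_apply]
    refine ⟨⟨hdy, ?_⟩, ?_⟩
    · show gradient u₀ y = g₀ y
      rw [hgrady, hTg, hg₀def]
    · show g₀ y ∈ G
      rw [hg₀def, ← hTg]
      exact hTGy
  have hkey : ∀ y ∈ A, HasGradientAt u₀ (g₀ y) y := by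
    intro y hy
    have := hy.1.1.hasGradientAt
    rwa [hy.1.2] at this
  -- unique subgradient argument
  have hne : ∀ m : ℕ, (closedBall (0 : En n) (m : ℝ)).Nonempty :=
    fun m => ⟨0, mem_closedBall_self (by positivity)⟩
  have hbdd : ∀ (m : ℕ) (z : En n), BddAbove ((fun x => ⟪x, z⟫ - u₀ x) '' closedBall 0 m) := by
    intro m z
    exact ((isCompact_closedBall _ _).image_of_continuousOn
      ((continuous_id.inner continuous_const).continuousOn.sub (hucont m))).bddAbove
  have hvm_eq : ∀ (m : ℕ) (y zz : En n), HasGradientAt u₀ zz y → ‖y‖ ≤ m →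
      DifferentiableAt ℝ (v m) zz → ∀ w, HasGradientAt (v m) w zz → w = y := by
    intro m y zz hgr hym hdiff w hw
    apply subgrad_eq_grad _ hw
    intro z'
    have hyK : y ∈ closedBall (0 : En n) (m : ℝ) := mem_closedBall_zero_iff.2 hym
    have hub : v m zz ≤ ⟪y, zz⟫ - u₀ y := by
      apply csSup_le ((hne m).image _)
      rintro b ⟨x, hx, rfl⟩
      show ⟪x, zz⟫ - u₀ x ≤ ⟪y, zz⟫ - u₀ y
      have hgi := convexOn_gradient_ineq (hconv t₀ ht₀) hgr x
      have h2 : ⟪zz, x - y⟫ = ⟪zz, x⟫ - ⟪zz, y⟫ := inner_sub_right zz x y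
      have h3 : ⟪x, zz⟫ = ⟪zz, x⟫ := real_inner_comm zz x
      have h4 : ⟪y, zz⟫ = ⟪zz, y⟫ := real_inner_comm zz y
      linarith
    have hlb : ∀ z'' : En n, ⟪y, z''⟫ - u₀ y ≤ v m z'' :=
      fun z'' => le_csSup (hbdd m z'') ⟨y, hyK, rfl⟩
    calc v m zz + ⟪y, z' - zz⟫ ≤ (⟪y, zz⟫ - u₀ y) + (⟪y, z'⟫ - ⟪y, zz⟫) := by
          rw [inner_sub_right]; linarith
      _ = ⟪y, z'⟫ - u₀ y := by ring
      _ ≤ v m z' := hlb z'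
  have hinj : InjOn g₀ A := by
    intro y1 h1 y2 h2 heq
    obtain ⟨m, hm⟩ := exists_nat_ge (max ‖y1‖ ‖y2‖)
    have hzG : g₀ y1 ∈ G := h1.2
    have hd : DifferentiableAt ℝ (v m) (g₀ y1) := hzG m
    have e1 := hvm_eq m y1 (g₀ y1) (hkey y1 h1) (le_trans (le_max_left _ _) hm) hd
      (gradient (v m) (g₀ y1)) hd.hasGradientAt
    have hk2 : HasGradientAt u₀ (g₀ y1) y2 := by rw [heq]; exact hkey y2 h2
    have e2 := hvm_eq m y2 (g₀ y1) hk2 (le_trans (le_max_right _ _) hm) hd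
      (gradient (v m) (g₀ y1)) hd.hasGradientAt
    rw [← e1, ← e2]
  -- Lusin–Souslin: measurable inverse
  haveI : StandardBorelSpace A := hAmeas.standardBorel
  set fA : A → En n := fun a => g₀ a with hfAdef
  have hfAmeas : Measurable fA := (hgmeas t₀ ht₀).comp measurable_subtype_coe
  have hfAinj : Function.Injective fA := fun a b hab => Subtype.ext (hinj a.2 b.2 hab)
  have hemb : MeasurableEmbedding fA := hfAmeas.measurableEmbedding hfAinj
  set S : En n → En n :=
    fun z => if h : z ∈ range fA then ((rangeSplitting fA ⟨z, h⟩ : A) : En n) else 0 with hSdef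
  have hSmeas : Measurable S := by
    rw [hSdef]
    exact Measurable.dite
      (f := fun w : (range fA : Set (En n)) => ((rangeSplitting fA w : A) : En n))
      (g := fun _ => (0 : En n))
      (measurable_subtype_coe.comp hemb.measurable_rangeSplitting)
      measurable_const hemb.measurableSet_range
  have hSinv : ∀ y ∈ A, S (g₀ y) = y := by
    intro y hy
    have hmem : g₀ y ∈ range fA := ⟨⟨y, hy⟩, rfl⟩
    have happ : fA (rangeSplitting fA ⟨g₀ y, hmem⟩) = fA ⟨y, hy⟩ :=
      apply_rangeSplitting fA ⟨g₀ y, hmem⟩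
    have hval := hfAinj happ
    simp only [hSdef, dif_pos hmem, hval]
  -- the Monge maps
  refine ⟨fun t z => if ht : t ∈ Icc (0:ℝ) 1 then g t ht (S z) else 0, ?_, ?_, ?_⟩
  · intro t ht
    change (μ t₀).map (fun z => if h : t ∈ Icc (0:ℝ) 1 then g t h (S z) else 0) = μ t
    have hFt : (fun z => if h : t ∈ Icc (0:ℝ) 1 then g t h (S z) else 0)
        = fun z => g t ht (S z) := by
      funext z; rw [dif_pos ht]
    rw [hFt]
    have hμt₀ : μ t₀ = μb.map g₀ := by
      rw [← hpush t₀ ht₀]; exact Measure.map_congr (hgae t₀ ht₀)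
    have hmeasF : Measurable (fun z => g t ht (S z)) := (hgmeas t ht).comp hSmeas
    rw [hμt₀, Measure.map_map hmeasF (hgmeas t₀ ht₀)]
    have hcongr : (fun z => g t ht (S z)) ∘ g₀ =ᵐ[μb] T t := by
      filter_upwards [hAae, hgae t ht] with y hy hgy
      show g t ht (S (g₀ y)) = T t y
      rw [hSinv y hy, ← hgy]
    rw [Measure.map_congr hcongr, hpush t ht]
  · have hμt₀ : μ t₀ = μb.map g₀ := by
      rw [← hpush t₀ ht₀]; exact Measure.map_congr (hgae t₀ ht₀)
    rw [hμt₀]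
    have hset : MeasurableSet {z : En n |
        (if h : t₀ ∈ Icc (0:ℝ) 1 then g t₀ h (S z) else 0) = z} := by
      simp only [dif_pos ht₀]
      exact measurableSet_eq_fun ((hgmeas t₀ ht₀).comp hSmeas) measurable_id
    change ∀ᵐ z ∂(μb.map g₀), (if h : t₀ ∈ Icc (0:ℝ) 1 then g t₀ h (S z) else 0) = z
    rw [ae_map_iff (hgmeas t₀ ht₀).aemeasurable hset]
    filter_upwards [hAae] with y hy
    show (if h : t₀ ∈ Icc (0:ℝ) 1 then g t₀ h (S (g₀ y)) else 0) = g₀ y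
    rw [dif_pos ht₀, hSinv y hy]
  · intro t ht
    filter_upwards [hAae, hgae t ht, hgae t₀ ht₀] with y hy hgt hgt₀
    show (if h : t ∈ Icc (0:ℝ) 1 then g t h (S (T t₀ y)) else 0) = T t y
    rw [dif_pos ht, hgt₀, hSinv y hy, ← hgt]
end
end
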